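/- Update formula when adding a point (Theorem 3): for i, j ∈ {1,…,n}, MMJ(Ω_i, Ω_j | Ω_{[1,n+1]}) = min( MMJ(Ω_i, Ω_j | Ω_{[1,n]}), max( MMJ(Ω_{n+1}, Ω_i | Ω_{[1,n+1]}), MMJ(Ω_{n+1}, Ω_j | Ω_{[1,n+1]}) ) ). -/

import Mathlib

/-- The maximum jump (distance between consecutive points) along a list of points. -/
def maxJump {α : Type*} (d : α → α → ℝ) : List α → ℝ
  | a :: b :: l => max (d a b) (maxJump d (b :: l))
  | _ => 0

/-- `L` is a path from `i` to `j` all of whose points lie in `S`. -/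
def IsPathIn {α : Type*} (S : Set α) (i j : α) (L : List α) : Prop :=
  L.head? = some i ∧ L.getLast? = some j ∧ ∀ x ∈ L, x ∈ S

/-- Min-Max-Jump distance between `i` and `j` under the context `S`. -/
noncomputable def MMJ {α : Type*} (d : α → α → ℝ) (S : Set α) (i j : α) : ℝ :=
  sInf {m : ℝ | ∃ L : List α, IsPathIn S i j L ∧ maxJump d L = m}

section Aux

variable {α : Type*} {d : α → α → ℝ} {S : Set α}

lemma maxJump_nil : maxJump d ([] : List α) = 0 := rfl

lemma maxJump_single (a : α) : maxJump d [a] = 0 := rfl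

lemma maxJump_cons₂ (a b : α) (l : List α) :
    maxJump d (a :: b :: l) = max (d a b) (maxJump d (b :: l)) := rfl

lemma maxJump_nonneg (hd0 : ∀ a b, 0 ≤ d a b) : ∀ L : List α, 0 ≤ maxJump d L := by
  intro L
  induction L with
  | nil => exact le_refl 0
  | cons a l ih =>
    cases l with
    | nil => exact le_refl 0
    | cons b t =>
      rw [maxJump_cons₂]
      exact le_trans (hd0 a b) (le_max_left _ _)

lemma maxJump_mem (hd0 : ∀ a b, 0 ≤ d a b) :
    ∀ L : List α, (∀ x ∈ L, x ∈ S) → maxJump d L ∈ insert (0 : ℝ) (Set.image2 d S S) := by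
  intro L
  induction L with
  | nil => intro _; exact Set.mem_insert _ _
  | cons a l ih =>
    intro hmem
    cases l with
    | nil => exact Set.mem_insert _ _
    | cons b t =>
      rw [maxJump_cons₂]
      rcases le_total (d a b) (maxJump d (b :: t)) with h | h
      · rw [max_eq_right h]
        exact ih (fun x hx => hmem x (List.mem_cons_of_mem a hx))
      · rw [max_eq_left h]
        exact Set.mem_insert_of_mem _
          (Set.mem_image2_of_mem (hmem a List.mem_cons_self)
            (hmem b (List.mem_cons_of_mem a List.mem_cons_self)))

lemma maxJump_append (hd0 : ∀ a b, 0 ≤ d a b) :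
    ∀ (L : List α) (x y : α) (M : List α),
      maxJump d (L ++ x :: y :: M) =
        max (maxJump d (L ++ [x])) (max (d x y) (maxJump d (y :: M))) := by
  intro L
  induction L with
  | nil =>
    intro x y M
    simp only [List.nil_append, maxJump_cons₂, maxJump_single]
    rw [max_eq_right (le_trans (hd0 x y) (le_max_left _ _))]
  | cons a l ih =>
    intro x y M
    cases l with
    | nil =>
      simp only [List.cons_append, List.nil_append, maxJump_cons₂, maxJump_single]
      rw [max_eq_left (hd0 a x)]
    | cons b t =>
      have h1 : (a :: b :: t) ++ x :: y :: M = a :: ((b :: t) ++ x :: y :: M) := rfl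
      have h2 : (a :: b :: t) ++ [x] = a :: ((b :: t) ++ [x]) := rfl
      rw [h1, h2]
      have hb : (b :: t) ++ x :: y :: M = b :: (t ++ x :: y :: M) := rfl
      have hb2 : (b :: t) ++ [x] = b :: (t ++ [x]) := rfl
      rw [hb, hb2, maxJump_cons₂, maxJump_cons₂, ← hb, ← hb2, ih, max_assoc]

lemma maxJump_concat (hd0 : ∀ a b, 0 ≤ d a b) (L : List α) (x a : α) :
    maxJump d (L ++ [x] ++ [a]) = max (maxJump d (L ++ [x])) (d x a) := by
  have : L ++ [x] ++ [a] = L ++ x :: a :: [] := by simp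
  rw [this, maxJump_append hd0, maxJump_single]
  rw [max_eq_left (hd0 x a)]

lemma maxJump_reverse (hd0 : ∀ a b, 0 ≤ d a b) (hsymm : ∀ a b, d a b = d b a) :
    ∀ L : List α, maxJump d L.reverse = maxJump d L := by
  intro L
  induction L with
  | nil => rfl
  | cons a l ih =>
    cases l with
    | nil => rfl
    | cons b t =>
      have h1 : (a :: b :: t).reverse = t.reverse ++ [b] ++ [a] := by simp
      have h2 : (b :: t).reverse = t.reverse ++ [b] := by simp
      rw [h1, maxJump_concat hd0, ← h2, ih, maxJump_cons₂, hsymm b a, max_comm]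

lemma IsPathIn.reverse {i j : α} {L : List α} (h : IsPathIn S i j L) :
    IsPathIn S j i L.reverse :=
  ⟨by rw [List.head?_reverse]; exact h.2.1,
   by rw [List.getLast?_reverse]; exact h.1,
   fun x hx => h.2.2 x (List.mem_reverse.mp hx)⟩

lemma pathSet_nonempty {i j : α} (hi : i ∈ S) (hj : j ∈ S) :
    {m : ℝ | ∃ L : List α, IsPathIn S i j L ∧ maxJump d L = m}.Nonempty := by
  refine ⟨maxJump d [i, j], [i, j], ⟨rfl, rfl, ?_⟩, rfl⟩
  intro x hx
  simp only [List.mem_cons, List.not_mem_nil, or_false] at hx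
  rcases hx with rfl | rfl
  · exact hi
  · exact hj

lemma pathSet_bddBelow (hd0 : ∀ a b, 0 ≤ d a b) (i j : α) :
    BddBelow {m : ℝ | ∃ L : List α, IsPathIn S i j L ∧ maxJump d L = m} := by
  refine ⟨0, ?_⟩
  rintro m ⟨L, _, rfl⟩
  exact maxJump_nonneg hd0 L

lemma MMJ_le_maxJump (hd0 : ∀ a b, 0 ≤ d a b) {i j : α} {L : List α}
    (hL : IsPathIn S i j L) : MMJ d S i j ≤ maxJump d L :=
  csInf_le (pathSet_bddBelow hd0 i j) ⟨L, hL, rfl⟩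

lemma le_MMJ {i j : α} {c : ℝ} (hi : i ∈ S) (hj : j ∈ S)
    (h : ∀ L : List α, IsPathIn S i j L → c ≤ maxJump d L) : c ≤ MMJ d S i j := by
  refine le_csInf (pathSet_nonempty hi hj) ?_
  rintro m ⟨L, hL, rfl⟩
  exact h L hL

lemma exists_path_eq_MMJ (hd0 : ∀ a b, 0 ≤ d a b) (hS : S.Finite) {i j : α}
    (hi : i ∈ S) (hj : j ∈ S) :
    ∃ L : List α, IsPathIn S i j L ∧ maxJump d L = MMJ d S i j := by
  have hfin : {m : ℝ | ∃ L : List α, IsPathIn S i j L ∧ maxJump d L = m}.Finite := by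
    refine Set.Finite.subset ((hS.image2 d hS).insert 0) ?_
    rintro m ⟨L, hL, rfl⟩
    exact maxJump_mem hd0 L hL.2.2
  exact (pathSet_nonempty hi hj).csInf_mem hfin

lemma MMJ_symm (hd0 : ∀ a b, 0 ≤ d a b) (hsymm : ∀ a b, d a b = d b a) (i j : α) :
    MMJ d S i j = MMJ d S j i := by
  unfold MMJ
  congr 1
  ext m
  constructor
  · rintro ⟨L, hL, rfl⟩
    exact ⟨L.reverse, hL.reverse, maxJump_reverse hd0 hsymm L⟩
  · rintro ⟨L, hL, rfl⟩
    exact ⟨L.reverse, hL.reverse, maxJump_reverse hd0 hsymm L⟩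

end Aux

theorem mmj_update {α : Type*} [MetricSpace α] (Ω : ℕ → α)
    (n : ℕ) (hn : 1 ≤ n) (hinj : Set.InjOn Ω (Set.Icc 1 (n + 1)))
    (i j : ℕ) (hi : i ∈ Finset.Icc 1 n) (hj : j ∈ Finset.Icc 1 n) :
    MMJ dist (Ω '' Set.Icc 1 (n + 1)) (Ω i) (Ω j) =
      min (MMJ dist (Ω '' Set.Icc 1 n) (Ω i) (Ω j))
        (max (MMJ dist (Ω '' Set.Icc 1 (n + 1)) (Ω (n + 1)) (Ω i))
             (MMJ dist (Ω '' Set.Icc 1 (n + 1)) (Ω (n + 1)) (Ω j))) := by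
  have hd0 : ∀ a b : α, 0 ≤ dist a b := fun a b => dist_nonneg
  have hsymm : ∀ a b : α, dist a b = dist b a := fun a b => dist_comm a b
  rw [Finset.mem_Icc] at hi hj
  set S : Set α := Ω '' Set.Icc 1 n with hS_def
  set S' : Set α := Ω '' Set.Icc 1 (n + 1) with hS'_def
  have hiI : i ∈ Set.Icc 1 n := Set.mem_Icc.mpr hi
  have hjI : j ∈ Set.Icc 1 n := Set.mem_Icc.mpr hj
  have hiI' : i ∈ Set.Icc 1 (n + 1) := Set.mem_Icc.mpr ⟨hi.1, by omega⟩
  have hjI' : j ∈ Set.Icc 1 (n + 1) := Set.mem_Icc.mpr ⟨hj.1, by omega⟩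
  have hn1I' : n + 1 ∈ Set.Icc 1 (n + 1) := Set.mem_Icc.mpr ⟨by omega, le_refl _⟩
  have hiS : Ω i ∈ S := Set.mem_image_of_mem Ω hiI
  have hjS : Ω j ∈ S := Set.mem_image_of_mem Ω hjI
  have hiS' : Ω i ∈ S' := Set.mem_image_of_mem Ω hiI'
  have hjS' : Ω j ∈ S' := Set.mem_image_of_mem Ω hjI'
  have hcS' : Ω (n + 1) ∈ S' := Set.mem_image_of_mem Ω hn1I'
  have hSsub : S ⊆ S' := Set.image_mono (Set.Icc_subset_Icc_right (by omega))
  have hS'fin : S'.Finite := (Set.finite_Icc 1 (n + 1)).image Ω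
  have hic : Ω i ≠ Ω (n + 1) := fun h => by
    have := hinj hiI' hn1I' h; omega
  have hjc : Ω j ≠ Ω (n + 1) := fun h => by
    have := hinj hjI' hn1I' h; omega
  set c := Ω (n + 1) with hc_def
  apply le_antisymm
  · -- LHS ≤ min
    apply le_min
    · -- LHS ≤ MMJ over S : paths in S are paths in S'
      obtain ⟨L, hL, hLe⟩ := exists_path_eq_MMJ hd0 ((Set.finite_Icc 1 n).image Ω) hiS hjS
      rw [← hLe]
      exact MMJ_le_maxJump hd0 ⟨hL.1, hL.2.1, fun x hx => hSsub (hL.2.2 x hx)⟩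
    · -- LHS ≤ max P Q : concatenate the two optimal paths through c
      obtain ⟨L1, hL1, hL1e⟩ := exists_path_eq_MMJ hd0 hS'fin hcS' hiS'
      obtain ⟨L2, hL2, hL2e⟩ := exists_path_eq_MMJ hd0 hS'fin hcS' hjS'
      -- L1 = c :: t1 with t1 ≠ [], L2 = c :: y :: t2
      obtain ⟨c1, t1, rfl⟩ : ∃ c1 t1, L1 = c1 :: t1 := by
        cases L1 with
        | nil => simp [IsPathIn] at hL1
        | cons a l => exact ⟨a, l, rfl⟩
      have hc1 : c1 = c := by
        have := hL1.1; simp at this; exact this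
      subst hc1
      obtain ⟨c2, t2', rfl⟩ : ∃ c2 t2', L2 = c2 :: t2' := by
        cases L2 with
        | nil => simp [IsPathIn] at hL2
        | cons a l => exact ⟨a, l, rfl⟩
      have hc2 : c2 = c := by
        have := hL2.1; simp at this; exact this
      subst hc2
      have ht1ne : t1 ≠ [] := by
        rintro rfl
        have := hL1.2.1
        simp at this
        exact hic this.symm
      have ht2ne : t2' ≠ [] := by
        rintro rfl
        have := hL2.2.1
        simp at this
        exact hjc this.symm
      obtain ⟨y, t2, rfl⟩ : ∃ y t2, t2' = y :: t2 := by
        cases t2' with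
        | nil => exact absurd rfl ht2ne
        | cons a l => exact ⟨a, l, rfl⟩
      set L : List α := t1.reverse ++ c :: y :: t2 with hL_def
      have hLrev : t1.reverse ++ [c] = (c :: t1).reverse := by simp
      have hLpath : IsPathIn S' (Ω i) (Ω j) L := by
        refine ⟨?_, ?_, ?_⟩
        · have h1 : (t1.reverse ++ c :: y :: t2).head? = t1.reverse.head? := by
            cases ht1r : t1.reverse with
            | nil => exact absurd (by simpa using ht1r) ht1ne
            | cons a l => simp [ht1r]
          rw [hL_def, h1, List.head?_reverse]
          have h2 := hL1.2.1
          rwa [show c :: t1 = [c] ++ t1 from rfl,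
            List.getLast?_append_of_ne_nil _ ht1ne] at h2
        · rw [hL_def, List.getLast?_append_of_ne_nil _ (by simp)]
          have h2 := hL2.2.1
          rwa [List.getLast?_cons_cons] at h2
        · intro x hx
          rw [hL_def] at hx
          rcases List.mem_append.mp hx with h | h
          · exact hL1.2.2 x (List.mem_cons_of_mem c (List.mem_reverse.mp h))
          · rcases List.mem_cons.mp h with rfl | h
            · exact hcS'
            · exact hL2.2.2 x (List.mem_cons_of_mem c h)
      have hLval : maxJump dist L = max (maxJump dist (c :: t1)) (maxJump dist (c :: y :: t2)) := by
        rw [hL_def, maxJump_append hd0, hLrev, maxJump_reverse hd0 hsymm, maxJump_cons₂]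
      calc MMJ dist S' (Ω i) (Ω j) ≤ maxJump dist L := MMJ_le_maxJump hd0 hLpath
        _ = max (maxJump dist (c :: t1)) (maxJump dist (c :: y :: t2)) := hLval
        _ = max (MMJ dist S' c (Ω i)) (MMJ dist S' c (Ω j)) := by rw [hL1e, hL2e]
  · -- min ≤ LHS
    refine le_MMJ hiS' hjS' ?_
    intro L hL
    by_cases hcL : c ∈ L
    · -- path goes through c : split it
      obtain ⟨u, v, rfl⟩ := List.append_of_mem hcL
      -- u ≠ [] since head is Ω i ≠ c
      obtain ⟨z, u', rfl⟩ : ∃ z u', u = z :: u' := by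
        cases u with
        | nil =>
          have := hL.1
          simp at this
          exact absurd this.symm hic
        | cons a l => exact ⟨a, l, rfl⟩
      have hz : z = Ω i := by
        have := hL.1; simp at this; exact this
      subst hz
      have hmemL : ∀ x ∈ (Ω i :: u') ++ [c], x ∈ S' := by
        intro x hx
        refine hL.2.2 x ?_
        rcases List.mem_append.mp hx with h | h
        · exact List.mem_append.mpr (Or.inl h)
        · simp at h
          subst h
          exact List.mem_append.mpr (Or.inr List.mem_cons_self)
      have hL1path : IsPathIn S' (Ω i) c ((Ω i :: u') ++ [c]) := by
        refine ⟨rfl, List.getLast?_concat, hmemL⟩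
      have hL2path : IsPathIn S' c (Ω j) (c :: v) := by
        refine ⟨rfl, ?_, ?_⟩
        · have := hL.2.1
          rwa [List.getLast?_append_of_ne_nil _ (by simp)] at this
        · intro x hx
          exact hL.2.2 x (List.mem_append.mpr (Or.inr hx))
      have hP : MMJ dist S' c (Ω i) ≤ maxJump dist ((Ω i :: u') ++ [c]) := by
        rw [MMJ_symm hd0 hsymm]
        exact MMJ_le_maxJump hd0 hL1path
      have hQ : MMJ dist S' c (Ω j) ≤ maxJump dist (c :: v) := MMJ_le_maxJump hd0 hL2path
      have key : max (MMJ dist S' c (Ω i)) (MMJ dist S' c (Ω j)) ≤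
          maxJump dist ((Ω i :: u') ++ c :: v) := by
        cases v with
        | nil =>
          refine max_le ?_ ?_
          · exact le_trans hP (le_of_eq rfl)
          · exact le_trans hQ (by
              rw [maxJump_single]
              exact maxJump_nonneg hd0 _)
        | cons y v' =>
          rw [maxJump_append hd0, ← maxJump_cons₂]
          exact max_le (le_trans hP (le_max_left _ _)) (le_trans hQ (le_max_right _ _))
      exact le_trans (min_le_right _ _) key
    · -- path avoids c : it lies in S
      have hpathS : IsPathIn S (Ω i) (Ω j) L := by
        refine ⟨hL.1, hL.2.1, ?_⟩
        intro x hx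
        obtain ⟨k, hk, rfl⟩ := hL.2.2 x hx
        rw [Set.mem_Icc] at hk
        rcases eq_or_ne k (n + 1) with rfl | hkn
        · exact absurd hx hcL
        · exact Set.mem_image_of_mem Ω (Set.mem_Icc.mpr ⟨hk.1, by omega⟩)
      exact le_trans (min_le_left _ _) (MMJ_le_maxJump hd0 hpathS)
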